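/- For every integer n ≥ 6, the characteristic polynomial of the signless Laplacian matrix of the graph B_n² equals x (x−1)^{n−6} (x−2)² (x³ − (n+4)x² + (5n−2)x − 3n). -/

import Mathlib

open Polynomial

/-- The signless Laplacian matrix `Q(G) = D(G) + A(G)` of a simple graph, over `ℝ`. -/
noncomputable def signlessLaplacian {V : Type*} [Fintype V] [DecidableEq V]
    (G : SimpleGraph V) : Matrix V V ℝ :=
  letI := Classical.decRel G.Adj
  G.degMatrix ℝ + G.adjMatrix ℝ

/-- The signless Laplacian characteristic polynomial `Q_G(x) = det (x I - Q(G))`. -/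
noncomputable def Qpoly {V : Type*} [Fintype V] [DecidableEq V] (G : SimpleGraph V) :
    Polynomial ℝ :=
  (signlessLaplacian G).charpoly

/-- The signless Laplacian coefficients: `φ_i(G)` is `(-1)^i` times the coefficient of
`x^(n-i)` in the signless Laplacian characteristic polynomial. -/
noncomputable def phi {V : Type*} [Fintype V] [DecidableEq V] (G : SimpleGraph V) (i : ℕ) : ℝ :=
  (-1 : ℝ) ^ i * (Qpoly G).coeff (Fintype.card V - i)
/-- Attach `p i` pendant vertices at each vertex `i` of a base graph `H` on `Fin k`. -/
def addPendants {k : ℕ} (H : SimpleGraph (Fin k)) (p : Fin k → ℕ) :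
    SimpleGraph ((Fin k) ⊕ (Σ i : Fin k, Fin (p i))) where
  Adj x y :=
    match x, y with
    | Sum.inl a, Sum.inl b => H.Adj a b
    | Sum.inl a, Sum.inr b => a = b.1
    | Sum.inr a, Sum.inl b => a.1 = b
    | Sum.inr _, Sum.inr _ => False
  symm := ⟨by
    rintro (a | a) (b | b) h
    · exact H.adj_symm h
    · exact h.symm
    · exact h.symm
    · exact h⟩
  loopless := ⟨by
    rintro (a | a) h
    · exact H.irrefl h
    · exact h⟩
/-- The base of `B₇`: the complete bipartite graph `K_{2,3}` with parts `{u,v} = {0,1}` and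
`{u₁,w₁,v₁} = {2,3,4}`. -/
def B7base : SimpleGraph (Fin 5) :=
  SimpleGraph.fromRel (fun a b =>
    (a = 0 ∧ b = 2) ∨ (a = 0 ∧ b = 3) ∨ (a = 0 ∧ b = 4) ∨
    (a = 1 ∧ b = 2) ∨ (a = 1 ∧ b = 3) ∨ (a = 1 ∧ b = 4))

/-- `B₇(a,b,c,d,e)`: the base `B₇` with `a,…,e` pendant vertices attached at
`u,v,u₁,w₁,v₁` respectively. -/
def B7 (a b c d e : ℕ) := addPendants B7base ![a, b, c, d, e]

/-! ### Auxiliary material for the proof -/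

open Matrix

section Helpers

lemma degree_eq_sum {V : Type*} [Fintype V] [DecidableEq V] (G : SimpleGraph V)
    [DecidableRel G.Adj] (v : V) :
    G.degree v = ∑ u, if G.Adj v u then 1 else 0 := by
  rw [SimpleGraph.degree, SimpleGraph.neighborFinset_eq_filter, Finset.card_filter]

lemma B7_adj_inl_inl (m : ℕ) (a b : Fin 5) :
    (B7 m 0 0 0 0).Adj (Sum.inl a) (Sum.inl b) ↔ B7base.Adj a b := Iff.rfl

lemma B7_adj_inl_inr (m : ℕ) (a : Fin 5) (s : Σ i : Fin 5, Fin (![m,0,0,0,0] i)) :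
    (B7 m 0 0 0 0).Adj (Sum.inl a) (Sum.inr s) ↔ a = s.1 := Iff.rfl

lemma B7_adj_inr_inl (m : ℕ) (a : Fin 5) (s : Σ i : Fin 5, Fin (![m,0,0,0,0] i)) :
    (B7 m 0 0 0 0).Adj (Sum.inr s) (Sum.inl a) ↔ s.1 = a := Iff.rfl

lemma B7_adj_inr_inr (m : ℕ) (s t : Σ i : Fin 5, Fin (![m,0,0,0,0] i)) :
    ¬ (B7 m 0 0 0 0).Adj (Sum.inr s) (Sum.inr t) := fun h => h

lemma B7base_adj (a b : Fin 5) :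
    B7base.Adj a b ↔ ((a = 0 ∨ a = 1) ∧ (b = 2 ∨ b = 3 ∨ b = 4) ∨
      (b = 0 ∨ b = 1) ∧ (a = 2 ∨ a = 3 ∨ a = 4)) := by
  simp only [B7base, SimpleGraph.fromRel_adj]
  revert a b; decide

lemma B7_deg_inl (m : ℕ) (a : Fin 5) [DecidableRel (B7 m 0 0 0 0).Adj] :
    (B7 m 0 0 0 0).degree (Sum.inl a) = ![m+3,3,2,2,2] a := by
  rw [degree_eq_sum, Fintype.sum_sum_type, ← Finset.univ_sigma_univ, Finset.sum_sigma]
  simp only [B7_adj_inl_inl, B7_adj_inl_inr, B7base_adj]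
  fin_cases a <;>
    simp [Fin.sum_univ_five, Finset.sum_const,
      show (Finset.filter (fun x : Fin 5 => x = 2 ∨ x = 3 ∨ x = 4) Finset.univ).card = 3
        from by decide,
      show (Finset.filter (fun x : Fin 5 => x = 0 ∨ x = 1) Finset.univ).card = 2
        from by decide] <;> omega

lemma B7_deg_inr (m : ℕ) (s : Σ i : Fin 5, Fin (![m,0,0,0,0] i))
    [DecidableRel (B7 m 0 0 0 0).Adj] :
    (B7 m 0 0 0 0).degree (Sum.inr s) = 1 := by
  rw [degree_eq_sum, Fintype.sum_sum_type, ← Finset.univ_sigma_univ, Finset.sum_sigma]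
  simp only [B7_adj_inr_inl]
  simp [B7_adj_inr_inr, Finset.sum_ite_eq]

lemma vec_le (m : ℕ) (i : Fin 5) : ![m,0,0,0,0] i ≤ m := by
  fin_cases i <;> simp

/-- The sigma type of pendant fibers of `B_n²` is just `Fin m`. -/
def sigEquiv (m : ℕ) : (Σ i : Fin 5, Fin (![m,0,0,0,0] i)) ≃ Fin m where
  toFun x := ⟨x.2.1, lt_of_lt_of_le x.2.2 (vec_le m x.1)⟩
  invFun j := ⟨0, ⟨j.1, by simpa using j.2⟩⟩
  left_inv := by
    rintro ⟨i, j⟩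
    fin_cases i
    · rfl
    · exact j.elim0
    · exact j.elim0
    · exact j.elim0
    · exact j.elim0
  right_inv j := rfl

def Efull (m : ℕ) : (Fin 5 ⊕ Σ i : Fin 5, Fin (![m,0,0,0,0] i)) ≃ (Fin 5 ⊕ Fin m) :=
  Equiv.sumCongr (Equiv.refl _) (sigEquiv m)

noncomputable def QA (m : ℕ) : Matrix (Fin 5) (Fin 5) ℝ :=
  !![(m:ℝ)+3,0,1,1,1; 0,3,1,1,1; 1,1,2,0,0; 1,1,0,2,0; 1,1,0,0,2]

def QB (m : ℕ) : Matrix (Fin 5) (Fin m) ℝ := Matrix.of fun i _ => if i = 0 then 1 else 0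
def QC (m : ℕ) : Matrix (Fin m) (Fin 5) ℝ := Matrix.of fun _ j => if j = 0 then 1 else 0

noncomputable def Qm (m : ℕ) : Matrix (Fin 5 ⊕ Fin m) (Fin 5 ⊕ Fin m) ℝ :=
  Matrix.fromBlocks (QA m) (QB m) (QC m) 1

lemma reindex_Q (m : ℕ) :
    reindex (Efull m) (Efull m) (signlessLaplacian (B7 m 0 0 0 0)) = Qm m := by
  letI := Classical.decRel (B7 m 0 0 0 0).Adj
  ext x y
  rcases x with a | p <;> rcases y with b | q <;>
    simp only [reindex_apply, submatrix_apply, Efull, Equiv.sumCongr_symm, Equiv.sumCongr_apply,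
      Equiv.refl_symm, Equiv.refl_apply, Sum.map_inl, Sum.map_inr, Qm, signlessLaplacian,
      Matrix.add_apply, SimpleGraph.degMatrix, Matrix.diagonal_apply, SimpleGraph.adjMatrix_apply,
      Matrix.fromBlocks_apply₁₁, Matrix.fromBlocks_apply₁₂, Matrix.fromBlocks_apply₂₁,
      Matrix.fromBlocks_apply₂₂]
  · simp only [Sum.inl.injEq, B7_deg_inl, B7_adj_inl_inl, B7base_adj]
    fin_cases a <;> fin_cases b <;> simp [QA, vecHead, vecTail] <;> push_cast <;> ring_nf
  · simp [B7_adj_inl_inr, sigEquiv, QB]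
  · simp [B7_adj_inr_inl, sigEquiv, QC, eq_comm]
  · simp [B7_deg_inr, B7_adj_inr_inr, Matrix.one_apply]

noncomputable def B1 (m : ℕ) : Matrix (Fin 5) (Fin m) ℝ[X] :=
  Matrix.of fun i _ => if i = 0 then (-1 : ℝ[X]) else 0
noncomputable def C1 (m : ℕ) : Matrix (Fin m) (Fin 5) ℝ[X] :=
  Matrix.of fun _ j => if j = 0 then (-1 : ℝ[X]) else 0

lemma charQm (m : ℕ) : charmatrix (Qm m) =
    fromBlocks (charmatrix (QA m)) (B1 m) (C1 m) ((X - 1 : ℝ[X]) • 1) := by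
  have hB : -((QB m).map (⇑C)) = B1 m := by
    refine Matrix.ext fun i j => ?_; simp [QB, B1, apply_ite]
  have hC : -((QC m).map (⇑C)) = C1 m := by
    refine Matrix.ext fun i j => ?_; simp [QC, C1, apply_ite]
  have hD : charmatrix (1 : Matrix (Fin m) (Fin m) ℝ) = (X - 1 : ℝ[X]) • 1 := by
    refine Matrix.ext fun i j => ?_
    by_cases h : i = j
    · subst h; simp [charmatrix_apply_eq, Matrix.one_apply, Matrix.smul_apply]
    · simp [charmatrix_apply_ne _ _ _ h, Matrix.one_apply, h, Matrix.smul_apply]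
  rw [Qm, charmatrix_fromBlocks, hB, hC, hD]

lemma B1_mul_C1 (m : ℕ) : B1 m * C1 m =
    Matrix.of fun i k => if i = 0 ∧ k = 0 then (m : ℝ[X]) else 0 := by
  ext i k
  rcases eq_or_ne i 0 with hi | hi <;> rcases eq_or_ne k 0 with hk | hk <;>
    simp [B1, C1, Matrix.mul_apply, hi, hk, Finset.sum_const, Fintype.card_fin]

lemma det_aux {R : Type*} [CommRing R] {α β : Type*} [Fintype α] [Fintype β]
    [DecidableEq α] [DecidableEq β]
    (P : Matrix α α R) (Q : Matrix α β R) (Rm : Matrix β α R) (s : R) :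
    (fromBlocks P Q Rm (s • 1)).det * s ^ (Fintype.card α) =
      (s • P - Q * Rm).det * s ^ (Fintype.card β) := by
  have hmul : fromBlocks P Q Rm (s • (1 : Matrix β β R)) *
      fromBlocks (s • (1 : Matrix α α R)) 0 (-Rm) 1 =
      fromBlocks (s • P - Q * Rm) Q 0 (s • 1) := by
    rw [fromBlocks_multiply]
    simp [Matrix.mul_smul, Matrix.smul_mul, sub_eq_add_neg]
  have h := congrArg Matrix.det hmul
  rw [Matrix.det_mul, Matrix.det_fromBlocks_zero₁₂, Matrix.det_fromBlocks_zero₂₁,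
    Matrix.det_smul, Matrix.det_smul, Matrix.det_one, Matrix.det_one, mul_one, mul_one] at h
  simpa using h

noncomputable def P2 (k : ℕ) : Matrix (Fin 2) (Fin 2) ℝ[X] :=
  !![(X-1)*(X - ((k:ℝ[X]) + 4)) - ((k:ℝ[X])+1), 0; 0, (X-1)*(X-3)]
noncomputable def Q2 : Matrix (Fin 2) (Fin 3) ℝ[X] := Matrix.of fun _ _ => -(X-1)
noncomputable def R2 : Matrix (Fin 3) (Fin 2) ℝ[X] := Matrix.of fun _ _ => -(X-1)

noncomputable def M23 (k : ℕ) : Matrix (Fin 2 ⊕ Fin 3) (Fin 2 ⊕ Fin 3) ℝ[X] :=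
  fromBlocks (P2 k) Q2 R2 (((X-1)*(X-2) : ℝ[X]) • 1)

def e23 : (Fin 2 ⊕ Fin 3) ≃ Fin 5 where
  toFun x := Sum.elim (fun i => ⟨i.1, by omega⟩) (fun j => ⟨j.1 + 2, by omega⟩) x
  invFun i := if h : i.1 < 2 then Sum.inl ⟨i.1, h⟩ else Sum.inr ⟨i.1 - 2, by omega⟩
  left_inv := by decide
  right_inv := by decide

set_option maxHeartbeats 4000000 in
lemma hN (k : ℕ) : reindex e23 e23 (M23 k) =
    (X - 1 : ℝ[X]) • charmatrix (QA (k+1)) - B1 (k+1) * C1 (k+1) := by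
  rw [B1_mul_C1]
  refine Matrix.ext fun i j => ?_
  fin_cases i <;> fin_cases j <;>
    simp [M23, P2, Q2, R2, QA, e23, Equiv.symm, charmatrix_apply, Matrix.one_apply,
      Matrix.diagonal_apply, vecHead, vecTail, map_ofNat, Polynomial.C_eq_natCast,
      show ((0 : Fin 5) : ℕ) = 0 from rfl, show ((1 : Fin 5) : ℕ) = 1 from rfl,
      show ((2 : Fin 5) : ℕ) = 2 from rfl, show ((3 : Fin 5) : ℕ) = 3 from rfl,
      show ((4 : Fin 5) : ℕ) = 4 from rfl] <;>
    (first | (exact Or.inl trivial) | (left; push_cast; ring) | (push_cast; ring))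

end Helpers

/-- the signless Laplacian characteristic polynomial of
`B_n² = B₇(n−5,0,0,0,0)`. -/
theorem Qpoly_Bn2 (n : ℕ) (hn : 6 ≤ n) :
    Qpoly (B7 (n - 5) 0 0 0 0) =
      X * (X - 1) ^ (n - 6) * (X - 2) ^ 2 *
        (X ^ 3 - ((n : ℝ[X]) + 4) * X ^ 2 + (5 * (n : ℝ[X]) - 2) * X - 3 * (n : ℝ[X])) := by
  obtain ⟨k, rfl⟩ : ∃ k, n = k + 6 := ⟨n - 6, by omega⟩
  rw [show k + 6 - 5 = k + 1 from by omega, show k + 6 - 6 = k from by omega]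
  push_cast
  have h1 : Qpoly (B7 (k+1) 0 0 0 0) = (Qm (k+1)).charpoly := by
    rw [Qpoly, ← Matrix.charpoly_reindex (Efull (k+1)), reindex_Q]
  have h2 : (Qm (k+1)).charpoly =
      (fromBlocks (charmatrix (QA (k+1))) (B1 (k+1)) (C1 (k+1)) ((X - 1 : ℝ[X]) • 1)).det := by
    rw [Matrix.charpoly, charQm]
  have h3 := det_aux (charmatrix (QA (k+1))) (B1 (k+1)) (C1 (k+1)) (X - 1 : ℝ[X])
  simp only [Fintype.card_fin] at h3
  have h4 : ((X - 1 : ℝ[X]) • charmatrix (QA (k+1)) - B1 (k+1) * C1 (k+1)).det =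
      (M23 k).det := by
    rw [← hN k, Matrix.det_reindex_self]
  have h5 := det_aux (P2 k) Q2 R2 ((X-1)*(X-2) : ℝ[X])
  simp only [Fintype.card_fin] at h5
  have hdet2 : (((X-1)*(X-2) : ℝ[X]) • P2 k - Q2 * R2).det =
      (((X-1)*(X-2)) * ((X-1)*(X - ((k:ℝ[X]) + 4)) - ((k:ℝ[X])+1)) - 3*(X-1)^2) *
        (((X-1)*(X-2)) * ((X-1)*(X-3)) - 3*(X-1)^2) - 9*(X-1)^4 := by
    rw [Matrix.det_fin_two]
    simp [P2, Q2, R2, Matrix.mul_apply, Fin.sum_univ_three, Matrix.smul_apply]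
    ring
  have hX1 : (X - 1 : ℝ[X]) ≠ 0 := by
    simpa using Polynomial.X_sub_C_ne_zero (1 : ℝ)
  have hX2 : (X - 2 : ℝ[X]) ≠ 0 := by
    have := Polynomial.X_sub_C_ne_zero (2 : ℝ); rwa [map_ofNat] at this
  have hne : ((X - 1 : ℝ[X]) ^ 5 * ((X-1)*(X-2) : ℝ[X]) ^ 2) ≠ 0 :=
    mul_ne_zero (pow_ne_zero _ hX1) (pow_ne_zero _ (mul_ne_zero hX1 hX2))
  apply mul_right_cancel₀ hne
  rw [h1, h2]
  rw [M23] at h4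
  calc (fromBlocks (charmatrix (QA (k+1))) (B1 (k+1)) (C1 (k+1)) ((X - 1 : ℝ[X]) • 1)).det *
        ((X - 1 : ℝ[X]) ^ 5 * ((X-1)*(X-2) : ℝ[X]) ^ 2)
      = ((fromBlocks (charmatrix (QA (k+1))) (B1 (k+1)) (C1 (k+1)) ((X - 1 : ℝ[X]) • 1)).det *
          (X - 1 : ℝ[X]) ^ 5) * ((X-1)*(X-2) : ℝ[X]) ^ 2 := by ring
    _ = (((X - 1 : ℝ[X]) • charmatrix (QA (k+1)) - B1 (k+1) * C1 (k+1)).det * (X - 1 : ℝ[X]) ^ (k+1)) *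
          ((X-1)*(X-2) : ℝ[X]) ^ 2 := by rw [h3]
    _ = ((fromBlocks (P2 k) Q2 R2 (((X-1)*(X-2) : ℝ[X]) • 1)).det * ((X-1)*(X-2) : ℝ[X]) ^ 2) *
          (X - 1 : ℝ[X]) ^ (k+1) := by rw [h4]; ring
    _ = ((((X-1)*(X-2) : ℝ[X]) • P2 k - Q2 * R2).det * ((X-1)*(X-2) : ℝ[X]) ^ 3) *
          (X - 1 : ℝ[X]) ^ (k+1) := by rw [h5]
    _ = (X - 1 : ℝ[X]) ^ k * ((((((X-1)*(X-2)) * ((X-1)*(X - ((k:ℝ[X]) + 4)) - ((k:ℝ[X])+1)) -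
            3*(X-1)^2) * (((X-1)*(X-2)) * ((X-1)*(X-3)) - 3*(X-1)^2) - 9*(X-1)^4) *
            ((X-1)*(X-2) : ℝ[X]) ^ 3) * (X - 1)) := by
        rw [hdet2, pow_succ]; ring
    _ = (X - 1 : ℝ[X]) ^ k * ((X * (X - 2) ^ 2 *
            (X ^ 3 - ((k:ℝ[X]) + 6 + 4) * X ^ 2 + (5 * ((k:ℝ[X]) + 6) - 2) * X -
              3 * ((k:ℝ[X]) + 6))) * ((X - 1 : ℝ[X]) ^ 5 * ((X-1)*(X-2) : ℝ[X]) ^ 2)) := by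
        refine congrArg (fun t => (X - 1 : ℝ[X]) ^ k * t) ?_; ring
    _ = X * (X - 1) ^ k * (X - 2) ^ 2 *
          (X ^ 3 - ((k:ℝ[X]) + 6 + 4) * X ^ 2 + (5 * ((k:ℝ[X]) + 6) - 2) * X -
            3 * ((k:ℝ[X]) + 6)) * ((X - 1 : ℝ[X]) ^ 5 * ((X-1)*(X-2) : ℝ[X]) ^ 2) := by
        ring
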